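/- Let ζ be an irrational real number and k a positive integer. If λ_{k,1}(ζ) > 1, then λ_{1,1}(ζ) = k·λ_{k,1}(ζ) + k − 1 > 2k − 1 ≥ k (in particular λ_{1,1}(ζ) = ∞ if λ_{k,1}(ζ) = ∞). -/

import Mathlib

open scoped ENNReal

/-- The system `|x| ≤ X`, `max_{1≤i≤k} |ζ_i·x − y_i| ≤ X^(−η)` has at least `j`
linearly independent integer solutions `(x, y_1, …, y_k) ∈ ℤ^(k+1)`.
Here the solution vector `v i : Fin (k+1) → ℤ` has `x = v i 0` and `y_m = v i m.succ`. -/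
def HasSolutions (k : ℕ) (ζ : Fin k → ℝ) (η X : ℝ) (j : ℕ) : Prop :=
  ∃ v : Fin j → (Fin (k + 1) → ℤ), LinearIndependent ℤ v ∧
    ∀ i : Fin j, |(v i 0 : ℝ)| ≤ X ∧
      ∀ m : Fin k, |ζ m * (v i 0 : ℝ) - (v i m.succ : ℝ)| ≤ X ^ (-η)

/-- `λ_{k,j}(ζ⃗)`: the supremum in `[0,∞]` of all `η ∈ ℝ` such that the system has at
least `j` linearly independent solutions for arbitrarily large real `X`. -/
noncomputable def lambdaVec (k j : ℕ) (ζ : Fin k → ℝ) : ℝ≥0∞ :=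
  sSup {e : ℝ≥0∞ | ∃ η : ℝ, e = ENNReal.ofReal η ∧
    ∀ X₀ : ℝ, ∃ X : ℝ, X₀ ≤ X ∧ HasSolutions k ζ η X j}

/-- `λ̂_{k,j}(ζ⃗)`: the supremum in `[0,∞]` of all `η ∈ ℝ` such that the system has at
least `j` linearly independent solutions for every sufficiently large real `X`. -/
noncomputable def lambdaHatVec (k j : ℕ) (ζ : Fin k → ℝ) : ℝ≥0∞ :=
  sSup {e : ℝ≥0∞ | ∃ η : ℝ, e = ENNReal.ofReal η ∧
    ∃ X₀ : ℝ, ∀ X : ℝ, X₀ ≤ X → HasSolutions k ζ η X j}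

/-- `λ_{k,j}(ζ) = λ_{k,j}(ζ, ζ², …, ζ^k)`. -/
noncomputable def lambdaPow (k j : ℕ) (ζ : ℝ) : ℝ≥0∞ :=
  lambdaVec k j fun i => ζ ^ ((i : ℕ) + 1)

/-- `λ̂_{k,j}(ζ) = λ̂_{k,j}(ζ, ζ², …, ζ^k)`. -/
noncomputable def lambdaHatPow (k j : ℕ) (ζ : ℝ) : ℝ≥0∞ :=
  lambdaHatVec k j fun i => ζ ^ ((i : ℕ) + 1)

lemma int_eq_zero_of_abs_lt {n : ℤ} (h : |(n : ℝ)| < 1) : n = 0 := by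
  have h1 : ((|n| : ℤ) : ℝ) < 1 := by push_cast; exact h
  have h2 : |n| < 1 := by exact_mod_cast h1
  exact Int.abs_lt_one_iff.mp h2

lemma abs_pow_sub_pow_le' {a b M d : ℝ} (ha : |a| ≤ M) (hb : |b| ≤ M) (hd : |a - b| ≤ d) :
    ∀ n : ℕ, |a ^ (n + 1) - b ^ (n + 1)| ≤ ((n : ℝ) + 1) * M ^ n * d := by
  have hM : 0 ≤ M := (abs_nonneg a).trans ha
  have hd0 : 0 ≤ d := (abs_nonneg _).trans hd
  intro n
  induction n with
  | zero => simpa using hd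
  | succ n ih =>
    have key : a ^ (n + 2) - b ^ (n + 2)
        = a * (a ^ (n + 1) - b ^ (n + 1)) + b ^ (n + 1) * (a - b) := by ring
    have h1 : |a ^ (n + 2) - b ^ (n + 2)|
        ≤ |a| * |a ^ (n + 1) - b ^ (n + 1)| + |b| ^ (n + 1) * |a - b| := by
      rw [key]
      refine (abs_add_le _ _).trans ?_
      rw [abs_mul, abs_mul, abs_pow]
    have h2 : |a| * |a ^ (n + 1) - b ^ (n + 1)| + |b| ^ (n + 1) * |a - b|
        ≤ M * (((n : ℝ) + 1) * M ^ n * d) + M ^ (n + 1) * d := by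
      gcongr
    have h3 : M * (((n : ℝ) + 1) * M ^ n * d) + M ^ (n + 1) * d
        = (((n + 1 : ℕ) : ℝ) + 1) * M ^ (n + 1) * d := by push_cast; ring
    linarith
  
lemma exists_sol {k : ℕ} {ζv : Fin k → ℝ} {η X : ℝ} (hX : 1 < X) (hη : 0 < η)
    (h : HasSolutions k ζv η X 1) :
    ∃ w : Fin (k + 1) → ℤ, w 0 ≠ 0 ∧ |(w 0 : ℝ)| ≤ X ∧
      ∀ m : Fin k, |ζv m * (w 0 : ℝ) - (w m.succ : ℝ)| ≤ X ^ (-η) := by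
  obtain ⟨v, hli, hsol⟩ := h
  refine ⟨v 0, ?_, (hsol 0).1, (hsol 0).2⟩
  intro h0
  apply hli.ne_zero 0
  funext i
  simp only [Pi.zero_apply]
  have hXsm : X ^ (-η) < 1 := Real.rpow_lt_one_of_one_lt_of_neg hX (by linarith)
  refine Fin.cases ?_ ?_ i
  · exact h0
  · intro m
    have hm := (hsol 0).2 m
    rw [h0] at hm
    simp only [Int.cast_zero, mul_zero, zero_sub, abs_neg] at hm
    exact int_eq_zero_of_abs_lt (hm.trans_lt hXsm)

/-- Abbreviation: arbitrarily large `X` admit a nonzero solution. -/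
def AL (k : ℕ) (ζ η : ℝ) : Prop :=
  ∀ X₀ : ℝ, ∃ X : ℝ, X₀ ≤ X ∧ HasSolutions k (fun i : Fin k => ζ ^ ((i : ℕ) + 1)) η X 1

lemma lambdaPow_eq (k : ℕ) (ζ : ℝ) :
    lambdaPow k 1 ζ = sSup {e : ℝ≥0∞ | ∃ η : ℝ, e = ENNReal.ofReal η ∧ AL k ζ η} := rfl

set_option maxHeartbeats 1600000 in
lemma keyA (k : ℕ) (hk : 0 < k) {ζ : ℝ} (hζ : Irrational ζ) {η : ℝ} (hη : 1 < η)
    (hAL : AL k ζ η) : AL 1 ζ ((k : ℝ) * η + k - 1) := by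
  intro B₀
  have hη0 : (0 : ℝ) < η := by linarith
  have hη1 : (0 : ℝ) < η - 1 := by linarith
  set B : ℝ := max B₀ 1 with hBdef
  have hB1 : (1 : ℝ) ≤ B := le_max_right _ _
  set Q : ℤ := ⌈B⌉ with hQdef
  set P : ℤ := ⌈|ζ| * B + 1⌉ with hPdef
  have hQ1 : (1 : ℤ) ≤ Q := by
    have : (1 : ℝ) ≤ (Q : ℝ) := hB1.trans (Int.le_ceil B)
    exact_mod_cast this
  have hP0 : (0 : ℤ) ≤ P := by
    have h1 : (0 : ℝ) ≤ |ζ| * B + 1 := by positivity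
    have : (0 : ℝ) ≤ (P : ℝ) := h1.trans (Int.le_ceil _)
    exact_mod_cast this
  set F : Finset (ℤ × ℤ) :=
    (Finset.Icc (-Q) Q ×ˢ Finset.Icc (-P) P).filter (fun z => z.1 ≠ 0) with hFdef
  have hFne : F.Nonempty := by
    refine ⟨(1, 0), ?_⟩
    rw [hFdef, Finset.mem_filter, Finset.mem_product, Finset.mem_Icc, Finset.mem_Icc]
    refine ⟨⟨⟨by omega, by omega⟩, ⟨by omega, by omega⟩⟩, by norm_num⟩
  set c : ℝ := F.inf' hFne (fun z => |ζ * (z.1 : ℝ) - (z.2 : ℝ)|) with hcdef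
  have hcpos : 0 < c := by
    rw [hcdef, Finset.lt_inf'_iff]
    rintro ⟨q, p⟩ hz
    have hq : q ≠ 0 := (Finset.mem_filter.mp hz).2
    have hqR : (q : ℝ) ≠ 0 := Int.cast_ne_zero.mpr hq
    refine abs_pos.mpr fun he => hζ ⟨(p : ℚ) / (q : ℚ), ?_⟩
    push_cast
    field_simp
    linarith [sub_eq_zero.mp he]
  have hCpos : (0 : ℝ) < (|ζ| + 1) ^ k := by positivity
  set C : ℝ := (|ζ| + 1) ^ k + 1 with hCdef
  have hC1 : (1 : ℝ) ≤ C := by rw [hCdef]; linarith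
  set C₂ : ℝ := 1 + |ζ| + C with hC₂def
  have hC₂1 : (1 : ℝ) ≤ C₂ := by rw [hC₂def]; linarith [abs_nonneg ζ]
  obtain ⟨X, hXT, hs⟩ := hAL (max 2 (max (C₂ ^ (1 / (η - 1))) ((c⁻¹) ^ (1 / η))) + 1)
  have hmax2 : (2 : ℝ) ≤ max 2 (max (C₂ ^ (1 / (η - 1))) ((c⁻¹) ^ (1 / η))) := le_max_left _ _
  have hmaxA : C₂ ^ (1 / (η - 1)) ≤ max 2 (max (C₂ ^ (1 / (η - 1))) ((c⁻¹) ^ (1 / η))) :=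
    le_trans (le_max_left _ _) (le_max_right _ _)
  have hmaxB : (c⁻¹) ^ (1 / η) ≤ max 2 (max (C₂ ^ (1 / (η - 1))) ((c⁻¹) ^ (1 / η))) :=
    le_trans (le_max_right _ _) (le_max_right _ _)
  have hX2 : (2 : ℝ) ≤ X := by linarith
  have hX1 : (1 : ℝ) < X := by linarith
  have hX0 : (0 : ℝ) < X := by linarith
  have hXC₂ : C₂ ^ (1 / (η - 1)) < X := by linarith
  have hXcinv : (c⁻¹) ^ (1 / η) < X := by linarith
  have hXpow : C₂ * X ^ ((1 : ℝ) - η) < 1 := by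
    have hCX : C₂ < X ^ (η - 1) := by
      have h1 : (C₂ ^ (1 / (η - 1))) ^ (η - 1) < X ^ (η - 1) :=
        Real.rpow_lt_rpow (Real.rpow_nonneg (by linarith) _) hXC₂ hη1
      rwa [← Real.rpow_mul (by linarith : (0 : ℝ) ≤ C₂), one_div,
        inv_mul_cancel₀ hη1.ne', Real.rpow_one] at h1
    have hp : 0 < X ^ (η - 1) := Real.rpow_pos_of_pos hX0 _
    rw [show (1 : ℝ) - η = -(η - 1) by ring, Real.rpow_neg hX0.le, ← div_eq_mul_inv]
    exact (div_lt_one hp).mpr hCX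
  have hXc : X ^ (-η) < c := by
    have h1 : c⁻¹ < X ^ η := by
      have h2 : ((c⁻¹) ^ (1 / η)) ^ η < X ^ η :=
        Real.rpow_lt_rpow (Real.rpow_nonneg (by positivity) _) hXcinv hη0
      rwa [← Real.rpow_mul (by positivity : (0 : ℝ) ≤ c⁻¹), one_div,
        inv_mul_cancel₀ hη0.ne', Real.rpow_one] at h2
    rw [Real.rpow_neg hX0.le]
    exact (inv_lt_comm₀ (Real.rpow_pos_of_pos hX0 η) hcpos).mpr h1
  obtain ⟨w, hw0, hwX, hwm⟩ := exists_sol hX1 hη0 hs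
  set x : ℤ := w 0 with hxdef
  set Y : ℕ → ℤ := fun i => if h : i < k + 1 then w ⟨i, h⟩ else 0 with hYdef
  have hYw : ∀ (i : ℕ) (h : i < k + 1), Y i = w ⟨i, h⟩ := fun i h => dif_pos h
  have hY0 : Y 0 = x := hYw 0 (by omega)
  have hYsol : ∀ i : ℕ, 1 ≤ i → i ≤ k → |ζ ^ i * (x : ℝ) - ((Y i : ℤ) : ℝ)| ≤ X ^ (-η) := by
    intro i h1 h2
    have hm' : |ζ ^ (i - 1 + 1) * (x : ℝ) - ((w (⟨i - 1, by omega⟩ : Fin k).succ : ℤ) : ℝ)|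
        ≤ X ^ (-η) := hwm ⟨i - 1, by omega⟩
    have e1 : i - 1 + 1 = i := by omega
    rw [e1] at hm'
    have e2 : (⟨i - 1, by omega⟩ : Fin k).succ = (⟨i, by omega⟩ : Fin (k + 1)) := by
      ext
      simp only [Fin.val_succ]
      omega
    rw [e2] at hm'
    rw [hYw i (by omega)]
    exact hm'
  have hXm1 : X ^ (-η) ≤ 1 :=
    Real.rpow_le_one_of_one_le_of_nonpos (by linarith) (by linarith)
  have hYb : ∀ i : ℕ, i ≤ k → |((Y i : ℤ) : ℝ)| ≤ C * X := by
    intro i hi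
    rcases Nat.eq_zero_or_pos i with rfl | hipos
    · rw [hY0]
      have := hwX
      rw [hCdef]
      nlinarith [abs_nonneg ((x : ℤ) : ℝ)]
    · have h := hYsol i hipos hi
      have h1 : |((Y i : ℤ) : ℝ)| - |ζ ^ i * (x : ℝ)| ≤ |ζ ^ i * (x : ℝ) - Y i| := by
        rw [abs_sub_comm]
        exact abs_sub_abs_le_abs_sub _ _
      have h2 : |ζ ^ i * (x : ℝ)| ≤ (|ζ| + 1) ^ k * X := by
        rw [abs_mul, abs_pow]
        have h3 : |ζ| ^ i ≤ (|ζ| + 1) ^ k :=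
          le_trans (pow_le_pow_left₀ (abs_nonneg ζ) (by linarith) i)
            (pow_le_pow_right₀ (by linarith [abs_nonneg ζ]) hi)
        exact mul_le_mul h3 hwX (abs_nonneg _) (by positivity)
      rw [hCdef]
      nlinarith
  have hrel : ∀ i : ℕ, 1 ≤ i → i < k → x * Y (i + 1) = Y i * Y 1 := by
    intro i h1 h2
    have e1 := hYsol (i + 1) (by omega) (by omega)
    have e2 := hYsol i h1 h2.le
    have e3 : |ζ * (x : ℝ) - ((Y 1 : ℤ) : ℝ)| ≤ X ^ (-η) := by
      have := hYsol 1 le_rfl hk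
      simpa using this
    have hiden : ((x * Y (i + 1) - Y i * Y 1 : ℤ) : ℝ)
        = (x : ℝ) * (((Y (i + 1) : ℤ) : ℝ) - ζ ^ (i + 1) * (x : ℝ))
          + ζ * (x : ℝ) * (ζ ^ i * (x : ℝ) - ((Y i : ℤ) : ℝ))
          + ((Y i : ℤ) : ℝ) * (ζ * (x : ℝ) - ((Y 1 : ℤ) : ℝ)) := by
      push_cast
      ring
    have hb1 : |(x : ℝ) * (((Y (i + 1) : ℤ) : ℝ) - ζ ^ (i + 1) * (x : ℝ))| ≤ X * X ^ (-η) := by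
      rw [abs_mul]
      exact mul_le_mul hwX (by rw [abs_sub_comm]; exact e1) (abs_nonneg _) (by linarith)
    have hb2 : |ζ * (x : ℝ) * (ζ ^ i * (x : ℝ) - ((Y i : ℤ) : ℝ))| ≤ |ζ| * X * X ^ (-η) := by
      rw [abs_mul, abs_mul]
      exact mul_le_mul (mul_le_mul le_rfl hwX (abs_nonneg _) (abs_nonneg _)) e2 (abs_nonneg _)
        (mul_nonneg (abs_nonneg _) hX0.le)
    have hb3 : |((Y i : ℤ) : ℝ) * (ζ * (x : ℝ) - ((Y 1 : ℤ) : ℝ))| ≤ C * X * X ^ (-η) := by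
      rw [abs_mul]
      exact mul_le_mul (hYb i h2.le) e3 (abs_nonneg _)
        (mul_nonneg (by linarith) hX0.le)
    have hXX : X * X ^ (-η) = X ^ ((1 : ℝ) - η) := by
      nth_rewrite 1 [← Real.rpow_one X]
      rw [← Real.rpow_add hX0, show (1 : ℝ) + -η = 1 - η by ring]
    have hlt : |((x * Y (i + 1) - Y i * Y 1 : ℤ) : ℝ)| < 1 := by
      have hsum : |((x * Y (i + 1) - Y i * Y 1 : ℤ) : ℝ)|
          ≤ X * X ^ (-η) + |ζ| * X * X ^ (-η) + C * X * X ^ (-η) := by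
        rw [hiden]
        exact (abs_add_three _ _ _).trans (add_le_add (add_le_add hb1 hb2) hb3)
      have heq2 : X * X ^ (-η) + |ζ| * X * X ^ (-η) + C * X * X ^ (-η)
          = C₂ * X ^ ((1 : ℝ) - η) := by
        rw [← hXX, hC₂def]
        ring
      linarith
    have h0 := int_eq_zero_of_abs_lt hlt
    have := sub_eq_zero.mp (by exact_mod_cast h0 : (x * Y (i + 1) - Y i * Y 1 : ℤ) = 0)
    exact this
  have hprod : ∀ i : ℕ, i ≤ k - 1 → x ^ i * Y (i + 1) = Y 1 ^ (i + 1) := by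
    intro i
    induction i with
    | zero => intro _; simp
    | succ n ih =>
      intro hn
      have h1 : x ^ n * Y (n + 1) = Y 1 ^ (n + 1) := ih (by omega)
      have h2 : x * Y (n + 2) = Y (n + 1) * Y 1 := hrel (n + 1) (by omega) (by omega)
      calc x ^ (n + 1) * Y (n + 2) = x ^ n * (x * Y (n + 2)) := by ring
        _ = x ^ n * (Y (n + 1) * Y 1) := by rw [h2]
        _ = (x ^ n * Y (n + 1)) * Y 1 := by ring
        _ = Y 1 ^ (n + 1) * Y 1 := by rw [h1]
        _ = Y 1 ^ (n + 2) := by ring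
  have hprodk : x ^ (k - 1) * Y k = Y 1 ^ k := by
    have h := hprod (k - 1) le_rfl
    rwa [Nat.sub_add_cancel hk] at h
  -- gcd decomposition
  set g : ℤ := ↑(x.gcd (Y 1)) with hgdef
  have hgpos : 0 < g := by
    have h1 : 0 < x.gcd (Y 1) := Int.gcd_pos_iff.mpr (Or.inl hw0)
    rw [hgdef]
    exact_mod_cast h1
  set q : ℤ := x / g with hqdef
  set p : ℤ := Y 1 / g with hpdef
  have hgx : g ∣ x := Int.gcd_dvd_left _ _
  have hgy : g ∣ Y 1 := Int.gcd_dvd_right _ _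
  have hxq : x = g * q := (Int.mul_ediv_cancel' hgx).symm
  have hyp : Y 1 = g * p := (Int.mul_ediv_cancel' hgy).symm
  have hcop : Int.gcd q p = 1 :=
    Int.gcd_div_gcd_div_gcd (Int.gcd_pos_iff.mpr (Or.inl hw0))
  have hq0 : q ≠ 0 := by
    intro h
    rw [h, mul_zero] at hxq
    exact hw0 hxq
  have hdvd : q ^ (k - 1) ∣ g := by
    have h1 : g ^ (k - 1) * (q ^ (k - 1) * Y k) = g ^ (k - 1) * (g * p ^ k) := by
      have h2 : (g * q) ^ (k - 1) * Y k = (g * p) ^ k := by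
        rw [← hxq, ← hyp]; exact hprodk
      calc g ^ (k - 1) * (q ^ (k - 1) * Y k) = (g * q) ^ (k - 1) * Y k := by ring
        _ = (g * p) ^ k := h2
        _ = g ^ (k - 1) * (g * p ^ k) := by
            have hgk : g ^ k = g ^ (k - 1) * g := by
              rw [← pow_succ, Nat.sub_add_cancel hk]
            rw [mul_pow, hgk]
            ring
    have h3 : q ^ (k - 1) * Y k = g * p ^ k :=
      mul_left_cancel₀ (pow_ne_zero _ hgpos.ne') h1
    have h4 : q ^ (k - 1) ∣ g * p ^ k := ⟨Y k, h3.symm⟩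
    have h5 : IsCoprime (q ^ (k - 1)) (p ^ k) :=
      ((Int.isCoprime_iff_gcd_eq_one.mpr hcop).pow)
    exact h5.dvd_of_dvd_mul_right h4
  have hgq : |q| ^ (k - 1) ≤ g := by
    refine Int.le_of_dvd hgpos ?_
    rw [← abs_pow]
    exact (abs_dvd _ _).mpr hdvd
  have hxqabs : |q| ^ k ≤ |x| := by
    rw [hxq, abs_mul, abs_of_pos hgpos]
    calc |q| ^ k = |q| ^ (k - 1) * |q| := by
          rw [← pow_succ, Nat.sub_add_cancel hk]
      _ ≤ g * |q| := mul_le_mul_of_nonneg_right hgq (abs_nonneg _)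
  -- real versions
  have hg0R : (0 : ℝ) < (g : ℝ) := by exact_mod_cast hgpos
  have hg1R : (1 : ℝ) ≤ (g : ℝ) := by exact_mod_cast hgpos
  have happ : |ζ * (q : ℝ) - (p : ℝ)| ≤ X ^ (-η) / (g : ℝ) := by
    have h1 : |ζ * (x : ℝ) - ((Y 1 : ℤ) : ℝ)| ≤ X ^ (-η) := by
      have := hYsol 1 le_rfl hk
      simpa using this
    have hiden2 : ζ * (x : ℝ) - ((Y 1 : ℤ) : ℝ) = (g : ℝ) * (ζ * (q : ℝ) - (p : ℝ)) := by
      rw [hxq, hyp]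
      push_cast
      ring
    rw [hiden2, abs_mul, abs_of_pos hg0R] at h1
    rw [le_div_iff₀ hg0R]
    linarith
  set Q' : ℝ := |(q : ℝ)| with hQ'def
  have hQ'1 : (1 : ℝ) ≤ Q' := by
    have h1 : (1 : ℤ) ≤ |q| := Int.one_le_abs hq0
    rw [hQ'def, ← Int.cast_abs]
    exact_mod_cast h1
  have hQ'0 : (0 : ℝ) < Q' := by linarith
  have hqxR : Q' ^ k ≤ |(x : ℝ)| := by
    have h := (Int.cast_le (R := ℝ)).mpr hxqabs
    push_cast at h
    exact h
  have hQX : Q' ^ k ≤ X := hqxR.trans hwX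
  have hgqR : Q' ^ (k - 1) ≤ (g : ℝ) := by
    have h := (Int.cast_le (R := ℝ)).mpr hgq
    push_cast at h
    exact h
  have hfinal : |ζ * (q : ℝ) - (p : ℝ)| ≤ Q' ^ (-((k : ℝ) * η + (k : ℝ) - 1)) := by
    have step1 : X ^ (-η) ≤ (Q' ^ k) ^ (-η) :=
      Real.rpow_le_rpow_of_nonpos (pow_pos hQ'0 k) hQX (by linarith)
    have step2 : ((Q' ^ k : ℝ)) ^ (-η) = Q' ^ (-((k : ℝ) * η)) := by
      rw [← Real.rpow_natCast Q' k, ← Real.rpow_mul hQ'0.le]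
      congr 1
      ring
    calc |ζ * (q : ℝ) - (p : ℝ)| ≤ X ^ (-η) / (g : ℝ) := happ
      _ ≤ Q' ^ (-((k : ℝ) * η)) / Q' ^ (k - 1 : ℕ) := by
          refine div_le_div₀ (Real.rpow_nonneg hQ'0.le _) ?_ (pow_pos hQ'0 _) hgqR
          rw [← step2]
          exact step1
      _ = Q' ^ (-((k : ℝ) * η + (k : ℝ) - 1)) := by
          rw [← Real.rpow_natCast Q' (k - 1), ← Real.rpow_sub hQ'0]
          congr 1
          push_cast [Nat.cast_sub hk]
          ring
  have hXm1g : X ^ (-η) / (g : ℝ) ≤ X ^ (-η) :=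
    div_le_self (Real.rpow_nonneg hX0.le _) hg1R
  have hqB : B < Q' := by
    by_contra hle
    push_neg at hle
    have hqQ : -Q ≤ q ∧ q ≤ Q := by
      have h1 : |(q : ℝ)| ≤ (Q : ℝ) := le_trans hle (Int.le_ceil B)
      have h2 : |q| ≤ Q := by exact_mod_cast h1
      exact abs_le.mp h2
    have hpP : -P ≤ p ∧ p ≤ P := by
      have h2 : |(p : ℝ)| - |ζ * (q : ℝ)| ≤ |ζ * (q : ℝ) - (p : ℝ)| := by
        rw [abs_sub_comm]
        exact abs_sub_abs_le_abs_sub _ _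
      have h3 : |ζ * (q : ℝ)| ≤ |ζ| * B := by
        rw [abs_mul]
        exact mul_le_mul_of_nonneg_left hle (abs_nonneg ζ)
      have h4 : |ζ * (q : ℝ) - (p : ℝ)| ≤ 1 := happ.trans (hXm1g.trans hXm1)
      have h5 : |(p : ℝ)| ≤ |ζ| * B + 1 := by linarith
      have h6 : |(p : ℝ)| ≤ (P : ℝ) := h5.trans (Int.le_ceil _)
      have h7 : |p| ≤ P := by exact_mod_cast h6
      exact abs_le.mp h7
    have hmem : (q, p) ∈ F := by
      rw [hFdef, Finset.mem_filter, Finset.mem_product, Finset.mem_Icc, Finset.mem_Icc]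
      exact ⟨⟨hqQ, hpP⟩, hq0⟩
    have hcle : c ≤ |ζ * (q : ℝ) - (p : ℝ)| := Finset.inf'_le _ hmem
    have hlt2 : |ζ * (q : ℝ) - (p : ℝ)| < c := lt_of_le_of_lt (happ.trans hXm1g) hXc
    linarith
  have hB₀Q' : B₀ ≤ Q' := le_trans (le_max_left B₀ 1) hqB.le
  clear_value B Q P F c C C₂ x Y g q p Q'
  refine ⟨Q', hB₀Q', ?_⟩
  refine ⟨fun _ => ![q, p], ?_, ?_⟩
  · apply linearIndependent_unique_iff.mpr
    intro hz
    apply hq0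
    have h0 := congrFun hz 0
    simpa using h0
  · intro i
    refine ⟨?_, ?_⟩
    · simpa using hQ'def.ge
    · intro m
      have hm0 : m = 0 := Subsingleton.elim m 0
      subst hm0
      simpa using hfinal


lemma keyB (k : ℕ) (hk : 0 < k) (ζ : ℝ) {η ε : ℝ} (hη : 0 < η) (hε : 0 < ε)
    (hAL : AL 1 ζ η) : AL k ζ ((η - ((k : ℝ) - 1)) / k - ε) := by
  intro X₀
  have hC1 : (1 : ℝ) ≤ |ζ| + 1 := le_add_of_nonneg_left (abs_nonneg ζ)
  set C : ℝ := |ζ| + 1 with hC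
  have hC0 : (0 : ℝ) < C := by rw [hC]; positivity
  have hkR : (0 : ℝ) < k := by exact_mod_cast hk
  have hk1R : (1 : ℝ) ≤ k := by exact_mod_cast hk
  have hCp1 : (1 : ℝ) ≤ C ^ (k - 1) := one_le_pow₀ hC1
  set K : ℝ := k * C ^ (k - 1) with hK
  have hK1 : (1 : ℝ) ≤ K := by nlinarith
  obtain ⟨X, hXT, hs⟩ := hAL (max (max X₀ 2) (K ^ (1 / (k * ε)) + 1))
  have hX2 : (2 : ℝ) ≤ X := le_trans (le_trans (le_max_right _ _) (le_max_left _ _)) hXT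
  have hX1 : (1 : ℝ) < X := by linarith
  have hX0 : (0 : ℝ) < X := by linarith
  have hXX₀ : X₀ ≤ X := le_trans (le_trans (le_max_left _ _) (le_max_left _ _)) hXT
  have hXK : K ≤ X ^ ((k : ℝ) * ε) := by
    have hkε : (0 : ℝ) < k * ε := by positivity
    have h1 : K ^ (1 / ((k : ℝ) * ε)) < X :=
      lt_of_lt_of_le (lt_add_one _) (le_trans (le_max_right _ _) hXT)
    have h2 : (K ^ (1 / ((k : ℝ) * ε))) ^ ((k : ℝ) * ε) ≤ X ^ ((k : ℝ) * ε) :=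
      Real.rpow_le_rpow (Real.rpow_nonneg (by linarith) _) h1.le hkε.le
    rwa [← Real.rpow_mul (by linarith : (0 : ℝ) ≤ K), one_div,
      inv_mul_cancel₀ hkε.ne', Real.rpow_one] at h2
  obtain ⟨w, hw0, hwX, hwm⟩ := exists_sol hX1 hη hs
  set x : ℤ := w 0 with hxdef
  set y : ℤ := w (Fin.succ 0) with hydef
  have hyap : |ζ * (x : ℝ) - (y : ℝ)| ≤ X ^ (-η) := by
    have h := hwm 0
    simpa [hydef] using h
  have hXm1 : X ^ (-η) ≤ 1 :=
    Real.rpow_le_one_of_one_le_of_nonpos (by linarith) (by linarith)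
  have hxR : |(x : ℝ)| ≤ X := hwX
  have hyR : |(y : ℝ)| ≤ C * X := by
    have h1 : |(y : ℝ)| - |ζ * (x : ℝ)| ≤ |ζ * (x : ℝ) - (y : ℝ)| := by
      rw [abs_sub_comm]
      exact abs_sub_abs_le_abs_sub _ _
    have h2 : |ζ * (x : ℝ)| ≤ |ζ| * X := by
      rw [abs_mul]
      exact mul_le_mul_of_nonneg_left hxR (abs_nonneg ζ)
    rw [hC]
    nlinarith
  have hζxR : |ζ * (x : ℝ)| ≤ C * X := by
    rw [abs_mul, hC]
    nlinarith [abs_nonneg ζ, abs_nonneg (x : ℝ)]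
  -- the main estimate
  have hmain : ∀ i : ℕ, 1 ≤ i → i ≤ k →
      |ζ ^ i * (x : ℝ) ^ k - (x : ℝ) ^ (k - i) * (y : ℝ) ^ i|
        ≤ (X ^ k) ^ (-((η - ((k : ℝ) - 1)) / k - ε)) := by
    intro i h1 h2
    have hxk : (x : ℝ) ^ k = (x : ℝ) ^ (k - i) * (x : ℝ) ^ i := by
      rw [← pow_add]
      congr 1
      omega
    have hfac : ζ ^ i * (x : ℝ) ^ k - (x : ℝ) ^ (k - i) * (y : ℝ) ^ i
        = (x : ℝ) ^ (k - i) * ((ζ * (x : ℝ)) ^ i - (y : ℝ) ^ i) := by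
      rw [hxk, mul_pow]
      ring
    obtain ⟨i', rfl⟩ : ∃ i', i = i' + 1 := ⟨i - 1, by omega⟩
    have hpow := abs_pow_sub_pow_le' hζxR hyR hyap i'
    have hL1 : |ζ ^ (i' + 1) * (x : ℝ) ^ k - (x : ℝ) ^ (k - (i' + 1)) * (y : ℝ) ^ (i' + 1)|
        ≤ X ^ (k - (i' + 1)) * ((((i' : ℝ)) + 1) * (C * X) ^ i' * X ^ (-η)) := by
      rw [hfac, abs_mul, abs_pow]
      gcongr
    have e1 : X ^ (k - (i' + 1)) * X ^ i' = X ^ (k - 1) := by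
      rw [← pow_add]
      congr 1
      omega
    have hCpow : C ^ i' ≤ C ^ (k - 1) := pow_le_pow_right₀ hC1 (by omega)
    have hi1 : ((i' : ℝ) + 1) ≤ (k : ℝ) := by exact_mod_cast h2
    have hXη : (0 : ℝ) < X ^ (-η) := Real.rpow_pos_of_pos hX0 _
    have hL2 : X ^ (k - (i' + 1)) * ((((i' : ℝ)) + 1) * (C * X) ^ i' * X ^ (-η))
        ≤ K * (X ^ (k - 1) * X ^ (-η)) := by
      rw [mul_pow]
      calc X ^ (k - (i' + 1)) * ((((i' : ℝ)) + 1) * (C ^ i' * X ^ i') * X ^ (-η))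
          = (((i' : ℝ) + 1) * C ^ i') * (X ^ (k - (i' + 1)) * X ^ i' * X ^ (-η)) := by ring
        _ ≤ ((k : ℝ) * C ^ (k - 1)) * (X ^ (k - (i' + 1)) * X ^ i' * X ^ (-η)) := by
            gcongr
        _ = K * (X ^ (k - 1) * X ^ (-η)) := by rw [e1, hK]
    have hnat : (X : ℝ) ^ ((k : ℝ) - 1) = X ^ (k - 1 : ℕ) := by
      rw [← Real.rpow_natCast X (k - 1)]
      congr 1
      push_cast [Nat.cast_sub hk]
      ring
    have hRHS : ((X : ℝ) ^ k) ^ (-((η - ((k : ℝ) - 1)) / k - ε))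
        = X ^ ((k : ℝ) - 1) * X ^ ((k : ℝ) * ε) * X ^ (-η) := by
      rw [← Real.rpow_natCast X k, ← Real.rpow_mul hX0.le,
        ← Real.rpow_add hX0, ← Real.rpow_add hX0]
      congr 1
      field_simp
      ring
    have hL3 : K * (X ^ (k - 1 : ℕ) * X ^ (-η))
        ≤ X ^ ((k : ℝ) - 1) * X ^ ((k : ℝ) * ε) * X ^ (-η) := by
      rw [hnat]
      have h0 : (0 : ℝ) < X ^ (k - 1 : ℕ) := by positivity
      calc K * (X ^ (k - 1 : ℕ) * X ^ (-η))
          ≤ X ^ ((k : ℝ) * ε) * (X ^ (k - 1 : ℕ) * X ^ (-η)) := by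
            gcongr
        _ = X ^ (k - 1 : ℕ) * X ^ ((k : ℝ) * ε) * X ^ (-η) := by ring
    rw [hRHS]
    calc |ζ ^ (i' + 1) * (x : ℝ) ^ k - (x : ℝ) ^ (k - (i' + 1)) * (y : ℝ) ^ (i' + 1)|
        ≤ X ^ (k - (i' + 1)) * ((((i' : ℝ)) + 1) * (C * X) ^ i' * X ^ (-η)) := hL1
      _ ≤ K * (X ^ (k - 1) * X ^ (-η)) := hL2
      _ ≤ X ^ ((k : ℝ) - 1) * X ^ ((k : ℝ) * ε) * X ^ (-η) := hL3
  -- x ≠ 0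
  refine ⟨X ^ k, le_trans hXX₀ (le_self_pow₀ hX1.le hk.ne'), ?_⟩
  refine ⟨fun _ => fun i : Fin (k + 1) => x ^ (k - (i : ℕ)) * y ^ (i : ℕ), ?_, ?_⟩
  · apply linearIndependent_unique_iff.mpr
    intro hz
    have h0 := congrFun hz 0
    simp only [Fin.val_zero, Nat.sub_zero, pow_zero, mul_one, Pi.zero_apply] at h0
    exact hw0 (pow_eq_zero_iff hk.ne' |>.mp h0)
  · intro i
    constructor
    · simp only [Fin.val_zero, Nat.sub_zero, pow_zero, mul_one]
      push_cast
      rw [abs_pow]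
      exact pow_le_pow_left₀ (abs_nonneg _) hxR k
    · intro m
      have hms : ((m.succ : Fin (k + 1)) : ℕ) = (m : ℕ) + 1 := rfl
      simp only [Fin.val_zero, Nat.sub_zero, pow_zero, mul_one, hms]
      push_cast
      exact hmain ((m : ℕ) + 1) (by omega) (by omega)

/-- Theorem (Schleischitz): if `λ_{k,1}(ζ) > 1` then
`λ_{1,1}(ζ) = k·λ_{k,1}(ζ) + k − 1 > 2k − 1 ≥ k`. -/
theorem stmt12 (k : ℕ) (hk : 0 < k) (ζ : ℝ) (hζ : Irrational ζ)
    (h : 1 < lambdaPow k 1 ζ) :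
    lambdaPow 1 1 ζ = (k : ℝ≥0∞) * lambdaPow k 1 ζ + ((k - 1 : ℕ) : ℝ≥0∞) ∧
    ((2 * k - 1 : ℕ) : ℝ≥0∞) < (k : ℝ≥0∞) * lambdaPow k 1 ζ + ((k - 1 : ℕ) : ℝ≥0∞) ∧
    (k : ℝ≥0∞) ≤ ((2 * k - 1 : ℕ) : ℝ≥0∞) := by
  classical
  set c : ℝ≥0∞ := ((k - 1 : ℕ) : ℝ≥0∞) with hcdef
  have hc_ne : c ≠ ⊤ := ENNReal.natCast_ne_top _
  have hk_ne : (k : ℝ≥0∞) ≠ 0 := by exact_mod_cast hk.ne'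
  have hk_top : (k : ℝ≥0∞) ≠ ⊤ := ENNReal.natCast_ne_top _
  have hcℝ : ((k - 1 : ℕ) : ℝ) = (k : ℝ) - 1 := by
    push_cast [Nat.cast_sub hk]; ring
  have hcofReal : c = ENNReal.ofReal ((k : ℝ) - 1) := by
    rw [hcdef, ← hcℝ, ENNReal.ofReal_natCast]
  have h2k : ((2 * k - 1 : ℕ) : ℝ≥0∞) = (k : ℝ≥0∞) + c := by
    rw [hcdef, show 2 * k - 1 = k + (k - 1) by omega]; push_cast; ring
  have part3 : (k : ℝ≥0∞) ≤ ((2 * k - 1 : ℕ) : ℝ≥0∞) := by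
    exact_mod_cast Nat.cast_le.mpr (by omega : k ≤ 2 * k - 1)
  have part2 : ((2 * k - 1 : ℕ) : ℝ≥0∞) < (k : ℝ≥0∞) * lambdaPow k 1 ζ + c := by
    rw [h2k]
    refine ENNReal.add_lt_add_right hc_ne ?_
    nth_rewrite 1 [← mul_one (k : ℝ≥0∞)]
    exact (ENNReal.mul_lt_mul_iff_right hk_ne hk_top).mpr h
  refine ⟨?_, part2, part3⟩
  set S : Set ℝ≥0∞ := {e : ℝ≥0∞ | ∃ η : ℝ, e = ENNReal.ofReal η ∧ AL k ζ η} with hSdef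
  set S₁ : Set ℝ≥0∞ := {e : ℝ≥0∞ | ∃ η : ℝ, e = ENNReal.ofReal η ∧ AL 1 ζ η} with hS₁def
  have hL : lambdaPow k 1 ζ = sSup S := lambdaPow_eq k ζ
  have hL₁ : lambdaPow 1 1 ζ = sSup S₁ := lambdaPow_eq 1 ζ
  rw [hL, hL₁]
  -- an element of S above 1
  obtain ⟨e₀, he₀S, he₀⟩ : ∃ e ∈ S, 1 < e := lt_sSup_iff.mp (hL ▸ h)
  obtain ⟨η₀, rfl, hAL₀⟩ := he₀S
  have hη₀ : 1 < η₀ := ENNReal.one_lt_ofReal.mp he₀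
  -- pointwise step for direction A
  have step : ∀ η : ℝ, 1 < η → AL k ζ η →
      (k : ℝ≥0∞) * ENNReal.ofReal η + c ≤ sSup S₁ := by
    intro η hη hALη
    have heq : (k : ℝ≥0∞) * ENNReal.ofReal η + c = ENNReal.ofReal ((k : ℝ) * η + k - 1) := by
      rw [hcofReal, ← ENNReal.ofReal_natCast k, ← ENNReal.ofReal_mul (by positivity),
        ← ENNReal.ofReal_add (by nlinarith) (by nlinarith)]
      ring_nf
    rw [heq]
    exact le_sSup ⟨(k : ℝ) * η + k - 1, rfl, keyA k hk hζ hη hALη⟩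
  have hpt : ∀ e ∈ S, (k : ℝ≥0∞) * e + c ≤ sSup S₁ := by
    rintro e ⟨η, rfl, hALη⟩
    rcases le_or_gt η 1 with hle | hgt
    · calc (k : ℝ≥0∞) * ENNReal.ofReal η + c ≤ (k : ℝ≥0∞) * ENNReal.ofReal η₀ + c := by
            gcongr
            exact hle.trans hη₀.le
        _ ≤ sSup S₁ := step η₀ hη₀ hAL₀
    · exact step η hgt hALη
  have hSne : Nonempty S := ⟨⟨ENNReal.ofReal η₀, ⟨η₀, rfl, hAL₀⟩⟩⟩
  apply le_antisymm
  · -- direction B : sSup S₁ ≤ k * sSup S + c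
    refine sSup_le ?_
    rintro e ⟨η', rfl, hAL1⟩
    rcases le_or_gt η' ((k : ℝ) - 1) with h1 | h2
    · calc ENNReal.ofReal η' ≤ c := by
            rw [hcofReal]; exact ENNReal.ofReal_le_ofReal h1
        _ ≤ (k : ℝ≥0∞) * sSup S + c := le_add_self
    · by_cases hfin : sSup S = ⊤
      · rw [hfin, ENNReal.mul_top hk_ne]
        exact le_top
      · set t : ℝ := (η' - ((k : ℝ) - 1)) / k with htdef
        have hkR : (0 : ℝ) < k := by exact_mod_cast hk
        have hk1R : (1 : ℝ) ≤ k := by exact_mod_cast hk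
        have ht : 0 < t := div_pos (by linarith) hkR
        have hεs : ∀ ε : ℝ, 0 < ε → ENNReal.ofReal (t - ε) ≤ sSup S := fun ε hε =>
          le_sSup ⟨t - ε, rfl, keyB k hk ζ (by linarith : (0:ℝ) < η') hε hAL1⟩
        have hℓ : ∀ ε : ℝ, 0 < ε → t - ε ≤ (sSup S).toReal := fun ε hε =>
          (ENNReal.ofReal_le_iff_le_toReal hfin).mp (hεs ε hε)
        have htℓ : t ≤ (sSup S).toReal := by
          by_contra hcon
          push_neg at hcon
          have := hℓ ((t - (sSup S).toReal) / 2) (by linarith)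
          linarith
        have hη't : η' = (k : ℝ) * t + ((k : ℝ) - 1) := by
          rw [htdef]
          field_simp
          ring
        calc ENNReal.ofReal η' = (k : ℝ≥0∞) * ENNReal.ofReal t + c := by
              rw [hη't, hcofReal, ← ENNReal.ofReal_natCast k,
                ← ENNReal.ofReal_mul (by positivity),
                ← ENNReal.ofReal_add (by positivity) (by linarith)]
          _ ≤ (k : ℝ≥0∞) * sSup S + c := by
              gcongr
              calc ENNReal.ofReal t ≤ ENNReal.ofReal (sSup S).toReal :=
                    ENNReal.ofReal_le_ofReal htℓ
                _ = sSup S := ENNReal.ofReal_toReal hfin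
  · -- direction A : k * sSup S + c ≤ sSup S₁
    calc (k : ℝ≥0∞) * sSup S + c = (⨆ e : S, (k : ℝ≥0∞) * (e : ℝ≥0∞)) + c := by
          rw [sSup_eq_iSup', ENNReal.mul_iSup]
      _ = ⨆ e : S, ((k : ℝ≥0∞) * (e : ℝ≥0∞) + c) := ENNReal.iSup_add _
      _ ≤ sSup S₁ := iSup_le fun e => hpt e e.2
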